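/- arXiv:1009.5142 — 2 statements merged into one kernel-verified Lean document; each statement's English description precedes it below -/
import Mathlib

section
/- Let k ≥ 1 and c₁,…,c_{k-1} ∈ ℝ. Then sup over all choices of β₁,…,β_{k-1} ∈ [0,1] of (1/N²) log ∫₀^∞ exp(−(ρ^k + β_{k-1}c_{k-1}ρ^{k-1} + ⋯ + β₁c₁ρ)) ρ^N dρ tends to 0 as N → ∞. -/
open MeasureTheory Filter

private lemma pow_le_one_add_pow {ρ : ℝ} (hρ : 0 ≤ ρ) {i m : ℕ} (him : i ≤ m) :
    ρ ^ i ≤ 1 + ρ ^ m := by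
  rcases le_total ρ 1 with h | h
  · have h1 : ρ ^ i ≤ 1 := pow_le_one₀ hρ h
    have h2 : 0 ≤ ρ ^ m := pow_nonneg hρ m
    linarith
  · have h1 : ρ ^ i ≤ ρ ^ m := pow_le_pow_right₀ h him
    linarith

set_option maxHeartbeats 1000000 in
/-- Lemma 2 of the paper: `sup_{β ∈ [0,1]^{k-1}} (1/N²) log Γ_N(β) → 0` as `N → ∞`,
where `Γ_N(β) = ∫₀^∞ exp(−(ρ^k + ∑_{i=1}^{k-1} β_i c_i ρ^i)) ρ^N dρ`.
The uniform convergence is expressed in ε–N₀ form. -/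
theorem stmt5 (k : ℕ) (hk : 1 ≤ k) (c : ℕ → ℝ) :
    ∀ ε : ℝ, 0 < ε → ∃ N₀ : ℕ, ∀ N : ℕ, N₀ ≤ N →
      ∀ β : ℕ → ℝ, (∀ i, β i ∈ Set.Icc (0:ℝ) 1) →
        |(1 / (N : ℝ) ^ 2) * Real.log (∫ ρ in Set.Ioi (0:ℝ),
            Real.exp (-(ρ ^ k + ∑ i ∈ Finset.Ico 1 k, β i * c i * ρ ^ i)) * ρ ^ N)| ≤ ε := by
  intro ε hε
  -- constants
  set M : ℝ := ∑ i ∈ Finset.Ico 1 k, |c i| with hMdef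
  have hM : 0 ≤ M := Finset.sum_nonneg fun i _ => abs_nonneg _
  set A : ℝ := M + M * (2 * M) ^ (k - 1) with hAdef
  have hA : 0 ≤ A := by positivity
  set B : ℝ := 2 ^ k + M * (1 + 2 ^ k) with hBdef
  have hB : 0 ≤ B := by positivity
  set J : ℝ := ∫ x in Set.Ioi (0:ℝ), Real.exp (-4⁻¹ * x) with hJdef
  have hgInt : IntegrableOn (fun x : ℝ => Real.exp (-4⁻¹ * x)) (Set.Ioi 0) :=
    exp_neg_integrableOn_Ioi 0 (by norm_num)
  set D : ℝ := B + Real.log 2 + A + 4⁻¹ + |Real.log J| with hDdef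
  -- sum bound
  have hS : ∀ β : ℕ → ℝ, (∀ i, β i ∈ Set.Icc (0:ℝ) 1) → ∀ ρ : ℝ, 0 ≤ ρ →
      |∑ i ∈ Finset.Ico 1 k, β i * c i * ρ ^ i| ≤ M * (1 + ρ ^ (k - 1)) := by
    intro β hβ ρ hρ
    calc |∑ i ∈ Finset.Ico 1 k, β i * c i * ρ ^ i|
        ≤ ∑ i ∈ Finset.Ico 1 k, |β i * c i * ρ ^ i| := Finset.abs_sum_le_sum_abs _ _
      _ ≤ ∑ i ∈ Finset.Ico 1 k, |c i| * (1 + ρ ^ (k - 1)) := by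
          refine Finset.sum_le_sum fun i hi => ?_
          obtain ⟨hi1, hi2⟩ := Finset.mem_Ico.mp hi
          have hik : i ≤ k - 1 := Nat.le_sub_one_of_lt hi2
          have hβi := hβ i
          rw [abs_mul, abs_mul, abs_of_nonneg hβi.1, abs_of_nonneg (pow_nonneg hρ i)]
          have h1 : ρ ^ i ≤ 1 + ρ ^ (k - 1) := pow_le_one_add_pow hρ hik
          have h2 : β i * |c i| ≤ |c i| := by
            nlinarith [abs_nonneg (c i), hβi.1, hβi.2]
          have h3 : 0 ≤ 1 + ρ ^ (k - 1) := by positivity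
          calc β i * |c i| * ρ ^ i ≤ |c i| * ρ ^ i := by
                have := mul_le_mul_of_nonneg_right h2 (pow_nonneg hρ i); linarith
            _ ≤ |c i| * (1 + ρ ^ (k - 1)) :=
                mul_le_mul_of_nonneg_left h1 (abs_nonneg _)
      _ = M * (1 + ρ ^ (k - 1)) := by rw [← Finset.sum_mul]
  -- quadratic absorbing bound
  have hA2 : ∀ ρ : ℝ, 0 ≤ ρ → M * (1 + ρ ^ (k - 1)) ≤ A + ρ ^ k / 2 := by
    intro ρ hρ
    have hksplit : ρ ^ k = ρ ^ (k - 1) * ρ := by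
      rw [← pow_succ]; congr 1; omega
    rcases le_total ρ (2 * M) with h | h
    · have h1 : ρ ^ (k - 1) ≤ (2 * M) ^ (k - 1) := pow_le_pow_left₀ hρ h _
      have h2 : 0 ≤ ρ ^ k := pow_nonneg hρ k
      have := mul_le_mul_of_nonneg_left h1 hM
      rw [hAdef]; ring_nf; ring_nf at this; nlinarith
    · have h1 : 0 ≤ ρ ^ (k - 1) := pow_nonneg hρ _
      have h2 : M * ρ ^ (k - 1) ≤ (ρ / 2) * ρ ^ (k - 1) := by nlinarith
      have h3 : 0 ≤ M * (2 * M) ^ (k - 1) := by positivity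
      rw [hAdef]; nlinarith
  -- the uniform bound on |log Γ|
  have key : ∀ N : ℕ, 1 ≤ N → ∀ β : ℕ → ℝ, (∀ i, β i ∈ Set.Icc (0:ℝ) 1) →
      |Real.log (∫ ρ in Set.Ioi (0:ℝ),
          Real.exp (-(ρ ^ k + ∑ i ∈ Finset.Ico 1 k, β i * c i * ρ ^ i)) * ρ ^ N)|
        ≤ D + N * Real.log 4 + N * Real.log N := by
    intro N hN1 β hβ
    set S : ℝ → ℝ := fun ρ => ∑ i ∈ Finset.Ico 1 k, β i * c i * ρ ^ i with hSdef
    set f : ℝ → ℝ := fun ρ => Real.exp (-(ρ ^ k + S ρ)) * ρ ^ N with hfdef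
    set C : ℝ := (1 + 4 ^ N * (N.factorial : ℝ)) * Real.exp (A + 4⁻¹) with hCdef
    have hCpos : 0 < C := by positivity
    -- pointwise upper bound
    have hfg : ∀ ρ : ℝ, 0 ≤ ρ → f ρ ≤ C * Real.exp (-4⁻¹ * ρ) := by
      intro ρ hρ
      set x : ℝ := ρ ^ k with hxdef
      have hx0 : 0 ≤ x := pow_nonneg hρ k
      have hSb := hS β hβ ρ hρ
      have h1 : -(x + S ρ) ≤ A - x / 2 := by
        have h2 := hA2 ρ hρ
        have h3 : -(M * (1 + ρ ^ (k - 1))) ≤ S ρ := neg_abs_le _ |>.trans' (by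
          have := hSb; linarith [neg_abs_le (S ρ)])
        linarith
      have h2 : ρ ^ N ≤ 1 + 4 ^ N * (N.factorial : ℝ) * Real.exp (x / 4) := by
        have ha : ρ ^ N ≤ 1 + ρ ^ (k * N) :=
          pow_le_one_add_pow hρ (Nat.le_mul_of_pos_left N hk)
        have hb : ρ ^ (k * N) = x ^ N := by rw [hxdef, ← pow_mul]
        have hc : x ^ N ≤ 4 ^ N * (N.factorial : ℝ) * Real.exp (x / 4) := by
          have hd := Real.pow_div_factorial_le_exp (x := x / 4) (by positivity) N
          have he : (x / 4) ^ N = x ^ N / 4 ^ N := div_pow x 4 N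
          rw [he, div_div] at hd
          have hf4 : (0:ℝ) < 4 ^ N * (N.factorial : ℝ) := by positivity
          calc x ^ N = x ^ N / (4 ^ N * (N.factorial : ℝ)) * (4 ^ N * (N.factorial : ℝ)) := by
                field_simp
            _ ≤ Real.exp (x / 4) * (4 ^ N * (N.factorial : ℝ)) :=
                mul_le_mul_of_nonneg_right hd hf4.le
            _ = 4 ^ N * (N.factorial : ℝ) * Real.exp (x / 4) := by ring
        linarith [hb ▸ ha]
      have hx1 : ρ - 1 ≤ x := by
        rcases le_total ρ 1 with h | h
        · linarith
        · have : ρ ≤ ρ ^ k := le_self_pow₀ h (by omega)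
          linarith
      calc f ρ = Real.exp (-(x + S ρ)) * ρ ^ N := rfl
        _ ≤ Real.exp (A - x / 2) * (1 + 4 ^ N * (N.factorial : ℝ) * Real.exp (x / 4)) :=
            mul_le_mul (Real.exp_le_exp.2 h1) h2 (pow_nonneg hρ N) (Real.exp_pos _).le
        _ = Real.exp (A - x / 2) + 4 ^ N * (N.factorial : ℝ) * Real.exp (A - x / 4) := by
            rw [mul_add, mul_one]
            congr 1
            rw [mul_comm (Real.exp _), mul_assoc, ← Real.exp_add]
            congr 2
            ring
        _ ≤ Real.exp (A - x / 4) + 4 ^ N * (N.factorial : ℝ) * Real.exp (A - x / 4) := by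
            have : Real.exp (A - x / 2) ≤ Real.exp (A - x / 4) :=
              Real.exp_le_exp.2 (by linarith)
            linarith
        _ = (1 + 4 ^ N * (N.factorial : ℝ)) * Real.exp (A - x / 4) := by ring
        _ ≤ (1 + 4 ^ N * (N.factorial : ℝ)) * Real.exp (A + 4⁻¹ + -4⁻¹ * ρ) := by
            refine mul_le_mul_of_nonneg_left (Real.exp_le_exp.2 (by linarith)) (by positivity)
        _ = C * Real.exp (-4⁻¹ * ρ) := by
            rw [hCdef, Real.exp_add (A + 4⁻¹), mul_assoc]
    -- nonnegativity
    have hf0 : ∀ ρ : ℝ, 0 ≤ ρ → 0 ≤ f ρ := fun ρ hρ =>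
      mul_nonneg (Real.exp_pos _).le (pow_nonneg hρ N)
    -- continuity / measurability
    have hcont : Continuous f := by
      have h1 : Continuous S :=
        continuous_finset_sum _ fun i _ => continuous_const.mul (continuous_pow i)
      have h2 : Continuous fun ρ : ℝ => -(ρ ^ k + S ρ) := ((continuous_pow k).add h1).neg
      exact (Real.continuous_exp.comp h2).mul (continuous_pow N)
    -- integrability
    have hgInt' : IntegrableOn (fun x : ℝ => C * Real.exp (-4⁻¹ * x)) (Set.Ioi 0) :=
      hgInt.const_mul C
    have hint : IntegrableOn f (Set.Ioi 0) := by
      refine Integrable.mono' hgInt' hcont.aestronglyMeasurable.restrict ?_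
      rw [ae_restrict_iff' measurableSet_Ioi]
      refine ae_of_all _ fun ρ hρ => ?_
      have hρ0 : (0:ℝ) ≤ ρ := le_of_lt hρ
      rw [Real.norm_eq_abs, abs_of_nonneg (hf0 ρ hρ0)]
      exact hfg ρ hρ0
    set Γ : ℝ := ∫ ρ in Set.Ioi (0:ℝ), f ρ with hΓdef
    -- upper bound on Γ
    have hupper : Γ ≤ C * J := by
      calc Γ ≤ ∫ ρ in Set.Ioi (0:ℝ), C * Real.exp (-4⁻¹ * ρ) :=
            setIntegral_mono_on hint hgInt' measurableSet_Ioi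
              (fun ρ hρ => hfg ρ (le_of_lt hρ))
        _ = C * J := by rw [hJdef, integral_const_mul]
    -- lower bound on Γ
    have hlow1 : ∀ ρ ∈ Set.Ioc (1:ℝ) 2, Real.exp (-B) ≤ f ρ := by
      intro ρ hρ
      obtain ⟨hρ1, hρ2⟩ := hρ
      have hρ0 : (0:ℝ) ≤ ρ := by linarith
      have hSb := hS β hβ ρ hρ0
      have h1 : ρ ^ (k - 1) ≤ 2 ^ (k - 1) := pow_le_pow_left₀ hρ0 hρ2 _
      have h2 : (2:ℝ) ^ (k - 1) ≤ 2 ^ k := pow_le_pow_right₀ (by norm_num) (Nat.sub_le k 1)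
      have h3 : ρ ^ k ≤ 2 ^ k := pow_le_pow_left₀ hρ0 hρ2 k
      have h4 : ρ ^ k + S ρ ≤ B := by
        have h5 : S ρ ≤ M * (1 + ρ ^ (k - 1)) := le_of_abs_le hSb
        have h6 : M * (1 + ρ ^ (k - 1)) ≤ M * (1 + 2 ^ k) :=
          mul_le_mul_of_nonneg_left (by linarith) hM
        rw [hBdef]; linarith
      have h7 : (1:ℝ) ≤ ρ ^ N := one_le_pow₀ hρ1.le
      calc Real.exp (-B) = Real.exp (-B) * 1 := (mul_one _).symm
        _ ≤ Real.exp (-(ρ ^ k + S ρ)) * ρ ^ N :=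
            mul_le_mul (Real.exp_le_exp.2 (by linarith)) h7 zero_le_one (Real.exp_pos _).le
        _ = f ρ := rfl
    have hlower : Real.exp (-B) ≤ Γ := by
      have hsub : Set.Ioc (1:ℝ) 2 ⊆ Set.Ioi 0 := fun x hx => lt_trans one_pos hx.1
      have hconst : IntegrableOn (fun _ : ℝ => Real.exp (-B)) (Set.Ioc (1:ℝ) 2) :=
        integrableOn_const (by rw [Real.volume_Ioc]; exact ENNReal.ofReal_ne_top)
      have h8 : Real.exp (-B) ≤ ∫ ρ in Set.Ioc (1:ℝ) 2, f ρ := by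
        have h9 := setIntegral_mono_on hconst (hint.mono_set hsub) measurableSet_Ioc hlow1
        rwa [setIntegral_const, Real.volume_real_Ioc, show (2:ℝ) - 1 = 1 by norm_num,
          max_eq_left zero_le_one, one_smul] at h9
      refine h8.trans (setIntegral_mono_set hint ?_ (ae_of_all _ hsub))
      rw [EventuallyLE, ae_restrict_iff' measurableSet_Ioi]
      exact ae_of_all _ fun ρ hρ => hf0 ρ (le_of_lt hρ)
    have hΓpos : 0 < Γ := lt_of_lt_of_le (Real.exp_pos _) hlower
    have hJpos : 0 < J := by
      by_contra h
      push_neg at h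
      have : C * J ≤ 0 := mul_nonpos_of_nonneg_of_nonpos hCpos.le h
      linarith
    -- log bounds
    have hlogup : Real.log Γ ≤ Real.log C + Real.log J := by
      rw [← Real.log_mul (ne_of_gt hCpos) (ne_of_gt hJpos)]
      exact Real.log_le_log hΓpos hupper
    have hlogC : Real.log C ≤ Real.log 2 + N * Real.log 4 + N * Real.log N + (A + 4⁻¹) := by
      rw [hCdef, Real.log_mul (by positivity) (Real.exp_ne_zero _), Real.log_exp]
      have hfact : (N.factorial : ℝ) ≤ (N:ℝ) ^ N := by exact_mod_cast Nat.factorial_le_pow N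
      have hNpos : (1:ℝ) ≤ (N:ℝ) := by exact_mod_cast hN1
      have h1 : (1:ℝ) + 4 ^ N * (N.factorial : ℝ) ≤ 2 * (4 ^ N * (N:ℝ) ^ N) := by
        have h2 : (1:ℝ) ≤ 4 ^ N := one_le_pow₀ (by norm_num)
        have h3 : (1:ℝ) ≤ (N:ℝ) ^ N := one_le_pow₀ hNpos
        have h5 : (1:ℝ) * 1 ≤ 4 ^ N * (N:ℝ) ^ N :=
          mul_le_mul h2 h3 zero_le_one (by positivity)
        have h6 : (4:ℝ) ^ N * (N.factorial : ℝ) ≤ 4 ^ N * (N:ℝ) ^ N :=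
          mul_le_mul_of_nonneg_left hfact (by positivity)
        linarith
      have h4 : Real.log (1 + 4 ^ N * (N.factorial : ℝ)) ≤
          Real.log 2 + N * Real.log 4 + N * Real.log N := by
        calc Real.log (1 + 4 ^ N * (N.factorial : ℝ))
            ≤ Real.log (2 * (4 ^ N * (N:ℝ) ^ N)) := Real.log_le_log (by positivity) h1
          _ = Real.log 2 + N * Real.log 4 + N * Real.log N := by
              rw [Real.log_mul (by norm_num) (by positivity),
                Real.log_mul (by positivity) (by positivity),
                Real.log_pow, Real.log_pow]
              push_cast
              ring
      linarith
    have hlog4 : 0 ≤ Real.log 4 := Real.log_nonneg (by norm_num)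
    have hlogN : 0 ≤ Real.log N := Real.log_nonneg (by exact_mod_cast hN1)
    have hlog2 : 0 ≤ Real.log 2 := Real.log_nonneg (by norm_num)
    rw [abs_le]
    constructor
    · have h1 : -B ≤ Real.log Γ := by
        have := Real.log_le_log (Real.exp_pos _) hlower
        rwa [Real.log_exp] at this
      have hN0 : (0:ℝ) ≤ N := Nat.cast_nonneg N
      rw [hDdef]
      have h5 := abs_nonneg (Real.log J)
      have h6 := mul_nonneg hN0 hlog4
      have h7 := mul_nonneg hN0 hlogN
      linarith
    · have h2 : Real.log J ≤ |Real.log J| := le_abs_self _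
      have hN0 : (0:ℝ) ≤ N := Nat.cast_nonneg N
      rw [hDdef]
      linarith
  -- the bounding sequence tends to 0
  set b : ℕ → ℝ := fun N => (D + N * Real.log 4 + N * Real.log N) / (N:ℝ) ^ 2 with hbdef
  have hcast : Tendsto (fun N : ℕ => (N:ℝ)) atTop atTop := tendsto_natCast_atTop_atTop
  have hsq : Tendsto (fun N : ℕ => (N:ℝ) ^ 2) atTop atTop :=
    (tendsto_pow_atTop (two_ne_zero)).comp hcast
  have h1 : Tendsto (fun N : ℕ => D / (N:ℝ) ^ 2) atTop (nhds 0) :=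
    tendsto_const_nhds.div_atTop hsq
  have h2 : Tendsto (fun N : ℕ => Real.log 4 / (N:ℝ)) atTop (nhds 0) :=
    tendsto_const_nhds.div_atTop hcast
  have h3 : Tendsto (fun N : ℕ => Real.log N / (N:ℝ)) atTop (nhds 0) :=
    (Real.isLittleO_log_id_atTop.tendsto_div_nhds_zero).comp hcast
  have hb : Tendsto b atTop (nhds 0) := by
    have hsum : Tendsto (fun N : ℕ =>
        D / (N:ℝ) ^ 2 + Real.log 4 / (N:ℝ) + Real.log N / (N:ℝ)) atTop (nhds 0) := by
      simpa using (h1.add h2).add h3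
    refine Tendsto.congr' ?_ hsum
    filter_upwards [eventually_ge_atTop 1] with N hN
    have hNpos : (0:ℝ) < (N:ℝ) := by exact_mod_cast Nat.lt_of_lt_of_le Nat.zero_lt_one hN
    show D / (N:ℝ) ^ 2 + Real.log 4 / (N:ℝ) + Real.log N / (N:ℝ) = b N
    rw [hbdef]
    have hN2 : (N:ℝ) ^ 2 = (N:ℝ) * (N:ℝ) := sq (N:ℝ)
    rw [hN2, div_add_div _ _ (by positivity : ((N:ℝ) * N) ≠ 0) hNpos.ne',
      div_add_div _ _ (by positivity : ((N:ℝ) * N * N) ≠ 0) hNpos.ne']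
    rw [div_eq_div_iff (by positivity) (by positivity)]
    ring
  have hev : ∀ᶠ N in atTop, b N < ε := hb.eventually_lt_const hε
  obtain ⟨N₀, hN₀⟩ := eventually_atTop.mp (hev.and (eventually_ge_atTop 1))
  refine ⟨N₀, fun N hN β hβ => ?_⟩
  obtain ⟨hbN, hN1⟩ := hN₀ N hN
  have hkey := key N hN1 β hβ
  have hNpos : (0:ℝ) < (N:ℝ) := by exact_mod_cast Nat.lt_of_lt_of_le Nat.zero_lt_one hN1
  have hinv : (0:ℝ) < 1 / (N:ℝ) ^ 2 := by positivity
  rw [abs_mul, abs_of_pos hinv]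
  calc (1 / (N:ℝ) ^ 2) * |Real.log (∫ ρ in Set.Ioi (0:ℝ),
        Real.exp (-(ρ ^ k + ∑ i ∈ Finset.Ico 1 k, β i * c i * ρ ^ i)) * ρ ^ N)|
      ≤ (1 / (N:ℝ) ^ 2) * (D + N * Real.log 4 + N * Real.log N) :=
        mul_le_mul_of_nonneg_left hkey hinv.le
    _ = b N := by rw [hbdef]; ring
    _ ≤ ε := hbN.le
end

section
/- Let k ≥ 1, n ≥ 2, and C, C₁ > 0. For the phase φ_N(ρ) = ρ^k + C₁(ρ^{k-1} + ⋯ + ρ) + C N^n ρ, one has (1/N²) log ∫₀^∞ e^{-φ_N(ρ)} ρ^N dρ → 0 as N → ∞. -/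
open MeasureTheory Filter

private lemma gInt (N : ℕ) :
    IntegrableOn (fun ρ : ℝ => Real.exp (-ρ) * ρ ^ N) (Set.Ioi 0) := by
  have h := Real.GammaIntegral_convergent (s := (N : ℝ) + 1) (by positivity)
  refine h.congr_fun (fun x hx => ?_) measurableSet_Ioi
  simp [Real.rpow_natCast]

private lemma gVal (N : ℕ) :
    ∫ ρ in Set.Ioi (0:ℝ), Real.exp (-ρ) * ρ ^ N = (N.factorial : ℝ) := by
  rw [← Real.Gamma_nat_eq_factorial,
    Real.Gamma_eq_integral (by positivity : (0:ℝ) < N + 1)]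
  refine setIntegral_congr_fun measurableSet_Ioi fun x hx => ?_
  simp [Real.rpow_natCast]

set_option maxHeartbeats 1000000 in
/-- Key estimate for the kinetic term: for the phase
`φ_N(ρ) = ρ^k + C₁(ρ^{k-1} + ⋯ + ρ) + C N^n ρ` with `k ≥ 1`, `n ≥ 2`, `C, C₁ > 0`,
one has `(1/N²) log ∫₀^∞ e^{-φ_N(ρ)} ρ^N dρ → 0` as `N → ∞`. -/
theorem stmt7 (k n : ℕ) (hk : 1 ≤ k) (hn : 2 ≤ n) (C C₁ : ℝ) (hC : 0 < C) (hC₁ : 0 < C₁) :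
    Tendsto (fun N : ℕ => (1 / (N : ℝ) ^ 2) *
        Real.log (∫ ρ in Set.Ioi (0:ℝ),
          Real.exp (-(ρ ^ k + C₁ * ∑ j ∈ Finset.Ico 1 k, ρ ^ j + C * (N : ℝ) ^ n * ρ)) * ρ ^ N))
      atTop (nhds 0) := by
  set f : ℕ → ℝ → ℝ := fun N ρ =>
    Real.exp (-(ρ ^ k + C₁ * ∑ j ∈ Finset.Ico 1 k, ρ ^ j + C * (N : ℝ) ^ n * ρ)) * ρ ^ N
    with hf
  set I : ℕ → ℝ := fun N => ∫ ρ in Set.Ioi (0:ℝ), f N ρ with hIdef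
  set B : ℝ := 2 ^ k + C₁ * (k * 2 ^ k) + 2 * C with hBdef
  have hB0 : 0 ≤ B := by positivity
  set A : ℝ := B + 2 * n + 2 with hAdef
  have hsum_nonneg : ∀ ρ : ℝ, 0 ≤ ρ → 0 ≤ ∑ j ∈ Finset.Ico 1 k, ρ ^ j := by
    intro ρ hρ
    exact Finset.sum_nonneg fun j _ => pow_nonneg hρ j
  -- tendsto of the bounding sequence
  have hg : Tendsto (fun N : ℕ => A * (Real.log N / N)) atTop (nhds 0) := by
    have h := Real.isLittleO_log_id_atTop.tendsto_div_nhds_zero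
    have h2 := (h.comp (tendsto_natCast_atTop_atTop (R := ℝ))).const_mul A
    simpa using h2
  refine squeeze_zero_norm' ?_ hg
  filter_upwards [eventually_ge_atTop 3] with N hN3
  have hN1 : 1 ≤ N := le_trans (by norm_num) hN3
  have hM3 : (3:ℝ) ≤ (N:ℝ) := by exact_mod_cast hN3
  have hM0 : (0:ℝ) < (N:ℝ) := by linarith
  -- log N ≥ 1
  have ht1 : 1 ≤ Real.log N := by
    have he3 : Real.exp 1 < 3 := lt_trans Real.exp_one_lt_d9 (by norm_num)
    calc (1:ℝ) = Real.log (Real.exp 1) := (Real.log_exp 1).symm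
      _ ≤ Real.log N := Real.log_le_log (Real.exp_pos 1) (by linarith)
  set t : ℝ := Real.log N with htdef
  -- the small scale a
  set a : ℝ := ((N:ℝ) ^ n)⁻¹ with hadef
  have ha : 0 < a := by positivity
  have ha1 : a ≤ 1 := by
    rw [hadef]
    have : (1:ℝ) ≤ (N:ℝ) ^ n := one_le_pow₀ (by linarith)
    exact inv_le_one_of_one_le₀ this
  have haN : (N:ℝ) ^ n * a = 1 := by
    rw [hadef]
    field_simp
  -- integrability
  have hInt : IntegrableOn (f N) (Set.Ioi 0) := by
    have hcont : Continuous (f N) := by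
      apply Continuous.mul
      · apply Real.continuous_exp.comp
        apply Continuous.neg
        apply Continuous.add
        apply Continuous.add
        · exact continuous_pow k
        · exact continuous_const.mul (continuous_finset_sum _ fun j _ => continuous_pow j)
        · exact (continuous_const.mul continuous_id)
      · exact continuous_pow N
    refine Integrable.mono (((gInt N).const_mul (Real.exp 1))) hcont.aestronglyMeasurable ?_
    refine (ae_restrict_iff' measurableSet_Ioi).2 (ae_of_all _ fun ρ hρ => ?_)
    have hρ0 : 0 < ρ := hρ
    have hfn : 0 ≤ f N ρ := mul_nonneg (Real.exp_pos _).le (pow_nonneg hρ0.le N)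
    have hφ : ρ - 1 ≤ ρ ^ k + C₁ * ∑ j ∈ Finset.Ico 1 k, ρ ^ j + C * (N:ℝ) ^ n * ρ := by
      have h1 : ρ - 1 ≤ ρ ^ k := by
        rcases le_or_gt ρ 1 with h | h
        · nlinarith [pow_nonneg hρ0.le k]
        · calc ρ - 1 ≤ ρ := by linarith
            _ = ρ ^ 1 := (pow_one ρ).symm
            _ ≤ ρ ^ k := pow_le_pow_right₀ h.le hk
      have h2 : 0 ≤ C₁ * ∑ j ∈ Finset.Ico 1 k, ρ ^ j :=
        mul_nonneg hC₁.le (hsum_nonneg ρ hρ0.le)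
      nlinarith [pow_nonneg hM0.le n, mul_nonneg (mul_nonneg hC.le (pow_nonneg hM0.le n)) hρ0.le]
    rw [Real.norm_of_nonneg hfn, Real.norm_of_nonneg
      (by positivity : (0:ℝ) ≤ Real.exp 1 * (Real.exp (-ρ) * ρ ^ N))]
    rw [hf]
    have : Real.exp (-(ρ ^ k + C₁ * ∑ j ∈ Finset.Ico 1 k, ρ ^ j + C * (N:ℝ) ^ n * ρ)) ≤
        Real.exp (1 - ρ) := Real.exp_le_exp.2 (by linarith)
    calc Real.exp (-(ρ ^ k + C₁ * ∑ j ∈ Finset.Ico 1 k, ρ ^ j + C * (N:ℝ) ^ n * ρ)) * ρ ^ N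
        ≤ Real.exp (1 - ρ) * ρ ^ N :=
          mul_le_mul_of_nonneg_right this (pow_nonneg hρ0.le N)
      _ = Real.exp 1 * (Real.exp (-ρ) * ρ ^ N) := by
          rw [← mul_assoc, ← Real.exp_add]; ring_nf
  -- upper bound for I N
  have hup : I N ≤ Real.exp 1 * (N.factorial : ℝ) := by
    have hmono : ∀ ρ ∈ Set.Ioi (0:ℝ), f N ρ ≤ Real.exp 1 * (Real.exp (-ρ) * ρ ^ N) := by
      intro ρ hρ
      have hρ0 : 0 < ρ := hρ
      have hφ : ρ - 1 ≤ ρ ^ k + C₁ * ∑ j ∈ Finset.Ico 1 k, ρ ^ j + C * (N:ℝ) ^ n * ρ := by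
        have h1 : ρ - 1 ≤ ρ ^ k := by
          rcases le_or_gt ρ 1 with h | h
          · nlinarith [pow_nonneg hρ0.le k]
          · calc ρ - 1 ≤ ρ := by linarith
              _ = ρ ^ 1 := (pow_one ρ).symm
              _ ≤ ρ ^ k := pow_le_pow_right₀ h.le hk
        have h2 : 0 ≤ C₁ * ∑ j ∈ Finset.Ico 1 k, ρ ^ j :=
          mul_nonneg hC₁.le (hsum_nonneg ρ hρ0.le)
        nlinarith [mul_nonneg (mul_nonneg hC.le (pow_nonneg hM0.le n)) hρ0.le]
      have hexp : Real.exp (-(ρ ^ k + C₁ * ∑ j ∈ Finset.Ico 1 k, ρ ^ j + C * (N:ℝ) ^ n * ρ)) ≤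
          Real.exp (1 - ρ) := Real.exp_le_exp.2 (by linarith)
      calc f N ρ ≤ Real.exp (1 - ρ) * ρ ^ N :=
            mul_le_mul_of_nonneg_right hexp (pow_nonneg hρ0.le N)
        _ = Real.exp 1 * (Real.exp (-ρ) * ρ ^ N) := by
            rw [← mul_assoc, ← Real.exp_add]; ring_nf
    calc I N ≤ ∫ ρ in Set.Ioi (0:ℝ), Real.exp 1 * (Real.exp (-ρ) * ρ ^ N) :=
          setIntegral_mono_on hInt ((gInt N).const_mul _) measurableSet_Ioi hmono
      _ = Real.exp 1 * ∫ ρ in Set.Ioi (0:ℝ), Real.exp (-ρ) * ρ ^ N := integral_const_mul _ _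
      _ = Real.exp 1 * (N.factorial : ℝ) := by rw [gVal]
  -- lower bound for I N
  have hlow : Real.exp (-B) * a ^ (N + 1) ≤ I N := by
    have hsub : Set.Ioc a (2*a) ⊆ Set.Ioi (0:ℝ) := fun x hx => lt_trans ha hx.1
    have hptwise : ∀ ρ ∈ Set.Ioc a (2*a), Real.exp (-B) * a ^ N ≤ f N ρ := by
      intro ρ hρ
      have hρ0 : 0 < ρ := lt_trans ha hρ.1
      have hρa : a ≤ ρ := hρ.1.le
      have hρ2 : ρ ≤ 2 := hρ.2.trans (by linarith)
      have h1 : ρ ^ k ≤ 2 ^ k := pow_le_pow_left₀ hρ0.le hρ2 k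
      have h2 : ∑ j ∈ Finset.Ico 1 k, ρ ^ j ≤ k * 2 ^ k := by
        calc ∑ j ∈ Finset.Ico 1 k, ρ ^ j ≤ ∑ j ∈ Finset.Ico 1 k, (2:ℝ) ^ k := by
              refine Finset.sum_le_sum fun j hj => ?_
              have hjk : j ≤ k := le_of_lt (Finset.mem_Ico.1 hj).2
              calc ρ ^ j ≤ 2 ^ j := pow_le_pow_left₀ hρ0.le hρ2 j
                _ ≤ 2 ^ k := pow_le_pow_right₀ one_le_two hjk
          _ = (k - 1 : ℕ) * 2 ^ k := by
              rw [Finset.sum_const, Nat.card_Ico, nsmul_eq_mul]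
          _ ≤ k * 2 ^ k := by
              have : ((k - 1 : ℕ) : ℝ) ≤ (k : ℝ) := by
                exact_mod_cast Nat.sub_le k 1
              nlinarith [pow_pos (zero_lt_two (α := ℝ)) k]
      have h3 : C * (N:ℝ) ^ n * ρ ≤ 2 * C := by
        have : C * (N:ℝ) ^ n * ρ ≤ C * (N:ℝ) ^ n * (2*a) :=
          mul_le_mul_of_nonneg_left hρ.2 (by positivity)
        calc C * (N:ℝ) ^ n * ρ ≤ C * (N:ℝ) ^ n * (2*a) := this
          _ = 2 * C * ((N:ℝ) ^ n * a) := by ring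
          _ = 2 * C := by rw [haN, mul_one]
      have hφB : ρ ^ k + C₁ * ∑ j ∈ Finset.Ico 1 k, ρ ^ j + C * (N:ℝ) ^ n * ρ ≤ B := by
        have := mul_le_mul_of_nonneg_left h2 hC₁.le
        rw [hBdef]; linarith
      have hexp : Real.exp (-B) ≤
          Real.exp (-(ρ ^ k + C₁ * ∑ j ∈ Finset.Ico 1 k, ρ ^ j + C * (N:ℝ) ^ n * ρ)) :=
        Real.exp_le_exp.2 (by linarith)
      have hpow : a ^ N ≤ ρ ^ N := pow_le_pow_left₀ ha.le hρa N
      exact mul_le_mul hexp hpow (pow_nonneg ha.le N) (Real.exp_pos _).le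
    have hIoc : ∫ ρ in Set.Ioc a (2*a), f N ρ ≤ I N := by
      refine setIntegral_mono_set hInt ?_ hsub.eventuallyLE
      refine (ae_restrict_iff' measurableSet_Ioi).2 (ae_of_all _ fun ρ hρ => ?_)
      exact mul_nonneg (Real.exp_pos _).le (pow_nonneg (le_of_lt hρ) N)
    have hconst : ∫ _ρ in Set.Ioc a (2*a), (Real.exp (-B) * a ^ N) =
        Real.exp (-B) * a ^ N * a := by
      rw [setIntegral_const, Real.volume_real_Ioc_of_le (by linarith), smul_eq_mul]
      ring
    have hmono2 : ∫ _ρ in Set.Ioc a (2*a), (Real.exp (-B) * a ^ N) ≤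
        ∫ ρ in Set.Ioc a (2*a), f N ρ :=
      setIntegral_mono_on (integrableOn_const measure_Ioc_lt_top.ne)
        (hInt.mono_set hsub) measurableSet_Ioc hptwise
    calc Real.exp (-B) * a ^ (N + 1) = Real.exp (-B) * a ^ N * a := by ring
      _ = ∫ _ρ in Set.Ioc a (2*a), (Real.exp (-B) * a ^ N) := hconst.symm
      _ ≤ ∫ ρ in Set.Ioc a (2*a), f N ρ := hmono2
      _ ≤ I N := hIoc
  have hIpos : 0 < I N := lt_of_lt_of_le (by positivity) hlow
  -- log bounds
  have hloga : Real.log a = -(n * t) := by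
    rw [hadef, Real.log_inv, Real.log_pow, htdef]
  have hlogup : Real.log (I N) ≤ 1 + (N:ℝ) * t := by
    have h1 : Real.log (I N) ≤ Real.log (Real.exp 1 * (N.factorial : ℝ)) := Real.log_le_log hIpos hup
    have hfacpos : (0:ℝ) < ((N.factorial : ℝ) : ℝ) := by exact_mod_cast Nat.factorial_pos N
    have h2 : Real.log (Real.exp 1 * (N.factorial : ℝ)) = 1 + Real.log ((N.factorial : ℝ)) := by
      rw [Real.log_mul (Real.exp_ne_zero 1) (ne_of_gt hfacpos), Real.log_exp]
    have h3 : Real.log (((N.factorial : ℝ) : ℝ)) ≤ (N:ℝ) * t := by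
      have hle : ((N.factorial : ℕ) : ℝ) ≤ ((N:ℝ)) ^ N := by
        exact_mod_cast Nat.factorial_le_pow N
      calc Real.log ((N.factorial : ℕ) : ℝ) ≤ Real.log ((N:ℝ) ^ N) := Real.log_le_log hfacpos hle
        _ = (N:ℝ) * t := by rw [Real.log_pow, htdef]
    linarith
  have hlogdown : -B - ((N:ℝ) + 1) * (n * t) ≤ Real.log (I N) := by
    have h1 : Real.log (Real.exp (-B) * a ^ (N+1)) ≤ Real.log (I N) :=
      Real.log_le_log (by positivity) hlow
    have h2 : Real.log (Real.exp (-B) * a ^ (N+1)) = -B + ((N:ℝ)+1) * Real.log a := by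
      rw [Real.log_mul (Real.exp_ne_zero _) (by positivity), Real.log_exp, Real.log_pow]
      push_cast
      ring
    rw [h2, hloga] at h1
    linarith
  -- assemble
  have ht0 : 0 < t := by linarith
  have hn0 : (0:ℝ) ≤ (n:ℝ) := Nat.cast_nonneg n
  have habs : |Real.log (I N)| ≤ A * ((N:ℝ) * t) := by
    set s : ℝ := (N:ℝ) * t with hsdef
    have hM1 : 1 ≤ (N:ℝ) := by linarith
    have hs1 : 1 ≤ s := by
      rw [hsdef]
      calc (1:ℝ) = 1 * 1 := by norm_num
        _ ≤ (N:ℝ) * t := mul_le_mul hM1 ht1 zero_le_one (by linarith)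
    have hts : t ≤ s := by
      rw [hsdef]
      exact le_mul_of_one_le_left ht0.le hM1
    have expand : A * s = B * s + 2 * ((n:ℝ) * s) + 2 * s := by rw [hAdef]; ring
    have eB : B ≤ B * s := le_mul_of_one_le_right hB0 hs1
    have ens : 0 ≤ (n:ℝ) * s := by positivity
    have ent : (n:ℝ) * t ≤ (n:ℝ) * s := mul_le_mul_of_nonneg_left hts hn0
    have eBs : 0 ≤ B * s := mul_nonneg hB0 (by linarith)
    have e3 : ((N:ℝ) + 1) * ((n:ℝ) * t) = (n:ℝ) * s + (n:ℝ) * t := by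
      rw [hsdef]; ring
    rw [abs_le]
    constructor
    · rw [expand]
      rw [e3] at hlogdown
      linarith
    · rw [expand]
      rw [hsdef] at hlogup ⊢
      rw [hsdef] at eB ens ent eBs
      linarith [hlogup]
  have : ‖(1 / (N:ℝ) ^ 2) * Real.log (I N)‖ ≤ A * (t / N) := by
    rw [Real.norm_eq_abs, abs_mul, abs_of_nonneg (by positivity : (0:ℝ) ≤ 1 / (N:ℝ)^2)]
    have h1 : (1 / (N:ℝ)^2) * |Real.log (I N)| ≤ (1 / (N:ℝ)^2) * (A * ((N:ℝ) * t)) :=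
      mul_le_mul_of_nonneg_left habs (by positivity)
    have h2 : (1 / (N:ℝ)^2) * (A * ((N:ℝ) * t)) = A * (t / N) := by
      field_simp
    linarith
  simpa [hIdef, hf, htdef] using this
end
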